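/- arXiv:2403.08166 — 3 statements merged into one kernel-verified Lean document; each statement's English description precedes it below -/
import Mathlib

section
/- Piola identity: Let d ≥ 1 and let f : ℝ^d → ℝ^d be twice continuously differentiable. Then the column-wise divergence of the adjugate of the Jacobian of f vanishes identically, i.e. for every x ∈ ℝ^d and every j ∈ {1,…,d}, Σ_{i=1}^d ∂/∂x_i [ (Adj(Df(x)))_{ij} ] = 0. -/
open Matrix Finset Equiv

-- Lemma B: det of a matrix with one row replaced by a basis vector, Leibniz style
theorem detRowBasis {d : ℕ} (A : Matrix (Fin d) (Fin d) ℝ) (a b : Fin d) :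
    (A.updateRow a (Pi.single b 1)).det
      = ∑ σ : Perm (Fin d),
          if σ b = a then (Perm.sign σ : ℝ) * ∏ k ∈ univ.erase b, A (σ k) k else 0 := by
  rw [det_apply]
  refine Finset.sum_congr rfl fun σ _ => ?_
  by_cases h : σ b = a
  · simp only [h, if_true]
    rw [← Finset.mul_prod_erase univ _ (mem_univ b)]
    rw [updateRow_apply, if_pos h, Pi.single_eq_same]
    rw [Units.smul_def, zsmul_eq_mul]

    rw [one_mul]
    congr 1
    refine Finset.prod_congr rfl fun k hk => ?_
    rw [updateRow_apply, if_neg]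
    intro hk'
    exact (Finset.mem_erase.mp hk).1 (σ.injective (hk'.trans h.symm))
  · rw [if_neg h]
    have : (∏ k, A.updateRow a (Pi.single b 1) (σ k) k) = 0 := by
      apply Finset.prod_eq_zero (Finset.mem_univ (σ⁻¹ a))
      rw [updateRow_apply, if_pos (show σ (σ⁻¹ a) = a from Equiv.apply_symm_apply σ a), Pi.single_apply, if_neg]
      intro hba; exact h (hba ▸ (show σ (σ⁻¹ a) = a from Equiv.apply_symm_apply σ a))
    rw [this, smul_zero]

theorem hasFDerivAt_det_aux {d : ℕ}
    (M : (Fin d → ℝ) → Matrix (Fin d) (Fin d) ℝ)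
    (M' : Fin d → Fin d → ((Fin d → ℝ) →L[ℝ] ℝ)) (x : Fin d → ℝ)
    (h : ∀ a b, HasFDerivAt (fun y => M y a b) (M' a b) x) :
    HasFDerivAt (fun y => (M y).det)
      (∑ a, ∑ b, ((M x).updateRow a (Pi.single b 1)).det • M' a b) x := by
  have key : ∀ σ : Perm (Fin d),
      HasFDerivAt (fun y => (Perm.sign σ : ℝ) * ∏ k, M y (σ k) k)
        ((Perm.sign σ : ℝ) •
          ∑ l, (∏ k ∈ univ.erase l, M x (σ k) k) • M' (σ l) l) x := by
    intro σ
    exact (HasFDerivAt.finset_prod (u := univ) (fun l _ => h (σ l) l)).const_mul _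
  have h1 : HasFDerivAt (fun y => (M y).det)
      (∑ σ : Perm (Fin d), (Perm.sign σ : ℝ) •
          ∑ l, (∏ k ∈ univ.erase l, M x (σ k) k) • M' (σ l) l) x := by
    have hs := HasFDerivAt.sum (u := (univ : Finset (Perm (Fin d)))) (fun σ _ => key σ)
    refine hs.congr_of_eventuallyEq (Filter.Eventually.of_forall fun y => ?_)
    show (M y).det = _
    rw [det_apply]
    simp only [Finset.sum_apply]
    refine Finset.sum_congr rfl fun σ _ => ?_
    rw [Units.smul_def, zsmul_eq_mul]
  convert h1 using 1
  calc ∑ a, ∑ b, ((M x).updateRow a (Pi.single b 1)).det • M' a b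
      = ∑ b, ∑ a, ((M x).updateRow a (Pi.single b 1)).det • M' a b := Finset.sum_comm
    _ = ∑ b, ∑ a, ∑ σ : Perm (Fin d), (if σ b = a then
          ((Perm.sign σ : ℝ) * ∏ k ∈ univ.erase b, M x (σ k) k) • M' a b else 0) := by
        refine Finset.sum_congr rfl fun b _ => Finset.sum_congr rfl fun a _ => ?_
        rw [detRowBasis, Finset.sum_smul]
        exact Finset.sum_congr rfl fun σ _ => by rw [ite_smul, zero_smul]
    _ = ∑ b, ∑ σ : Perm (Fin d), ∑ a, (if σ b = a then
          ((Perm.sign σ : ℝ) * ∏ k ∈ univ.erase b, M x (σ k) k) • M' a b else 0) := by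
        exact Finset.sum_congr rfl fun b _ => Finset.sum_comm
    _ = ∑ b, ∑ σ : Perm (Fin d),
          ((Perm.sign σ : ℝ) * ∏ k ∈ univ.erase b, M x (σ k) k) • M' (σ b) b := by
        refine Finset.sum_congr rfl fun b _ => Finset.sum_congr rfl fun σ _ => ?_
        rw [Finset.sum_ite_eq univ (σ b)
          (fun a => ((Perm.sign σ : ℝ) * ∏ k ∈ univ.erase b, M x (σ k) k) • M' a b),
          if_pos (mem_univ _)]
    _ = ∑ σ : Perm (Fin d), ∑ b,
          ((Perm.sign σ : ℝ) * ∏ k ∈ univ.erase b, M x (σ k) k) • M' (σ b) b :=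
        Finset.sum_comm
    _ = ∑ σ : Perm (Fin d), (Perm.sign σ : ℝ) •
          ∑ l, (∏ k ∈ univ.erase l, M x (σ k) k) • M' (σ l) l := by
        refine Finset.sum_congr rfl fun σ _ => ?_
        rw [smul_sum]
        exact Finset.sum_congr rfl fun l _ => by rw [smul_smul]

theorem rowSwapDet {d : ℕ} (A : Matrix (Fin d) (Fin d) ℝ) {j a : Fin d} (hja : j ≠ a)
    (u v : Fin d → ℝ) :
    ((A.updateRow j u).updateRow a v).det = -((A.updateRow j v).updateRow a u).det := by
  have hmat : ((A.updateRow j v).updateRow a u)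
      = ((A.updateRow j u).updateRow a v).submatrix (Equiv.swap j a) id := by
    ext m b
    rcases eq_or_ne m j with rfl | hmj
    · simp [Matrix.updateRow_apply, hja, Equiv.swap_apply_left, hja.symm]
    · rcases eq_or_ne m a with rfl | hma
      · simp [Matrix.updateRow_apply, hja, Equiv.swap_apply_right, hja.symm]
      · simp [Matrix.updateRow_apply, hmj, hma, Equiv.swap_apply_of_ne_of_ne hmj hma]
  rw [hmat, det_permute, Equiv.Perm.sign_swap hja]
  push_cast
  ring

theorem symAntisymCancel {d : ℕ} (S T : Fin d → Fin d → ℝ)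
    (hS : ∀ i b, S i b = S b i) (hT : ∀ i b, T i b = - T b i) :
    ∑ i, ∑ b, S i b * T i b = 0 := by
  have h : (∑ i, ∑ b, S i b * T i b) = - ∑ i, ∑ b, S i b * T i b := by
    calc (∑ i, ∑ b, S i b * T i b) = ∑ b, ∑ i, S i b * T i b := Finset.sum_comm
      _ = ∑ i, ∑ b, S b i * T b i := rfl
      _ = - ∑ i, ∑ b, S i b * T i b := by
          rw [← Finset.sum_neg_distrib]
          refine Finset.sum_congr rfl fun i _ => ?_
          rw [← Finset.sum_neg_distrib]
          refine Finset.sum_congr rfl fun b _ => ?_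
          rw [hS b i, hT b i]; ring
  linarith



/-- The Jacobian matrix of a map `f : ℝ^d → ℝ^d` at a point `x`:
`(jacobian f x) i j = ∂ f_i / ∂ x_j`. -/
noncomputable def jacobian {d : ℕ} (f : (Fin d → ℝ) → (Fin d → ℝ)) (x : Fin d → ℝ) :
    Matrix (Fin d) (Fin d) ℝ :=
  Matrix.of fun i j => fderiv ℝ f x (Pi.single j 1) i

/-- **Piola identity**: for a twice continuously differentiable map `f : ℝ^d → ℝ^d`,
the column-wise divergence of the adjugate of the Jacobian of `f` vanishes:
for every `x` and every `j`, `∑ i, ∂/∂x_i (Adj(Df(x)))_{ij} = 0`. -/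
theorem piola_identity {d : ℕ} (hd : 1 ≤ d) (f : (Fin d → ℝ) → (Fin d → ℝ))
    (hf : ContDiff ℝ 2 f) :
    ∀ (x : Fin d → ℝ) (j : Fin d),
      ∑ i, fderiv ℝ (fun y => (Matrix.adjugate (jacobian f y)) i j) x (Pi.single i 1) = 0 := by
  intro x j
  have hF : ContDiff ℝ 1 (fderiv ℝ f) := hf.fderiv_right (by norm_num)
  have hFd : DifferentiableAt ℝ (fderiv ℝ f) x :=
    (hF.differentiable one_ne_zero).differentiableAt
  set F'' := fderiv ℝ (fderiv ℝ f) x with hF''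
  have hsym : IsSymmSndFDerivAt ℝ f x := hf.contDiffAt.isSymmSndFDerivAt (by simp [minSmoothness_of_isRCLikeNormedField])
  -- the evaluation CLM
  set Ψ : Fin d → Fin d → ((Fin d → ℝ) →L[ℝ] ℝ) := fun a b =>
    ((ContinuousLinearMap.proj a).comp
      (ContinuousLinearMap.apply ℝ (Fin d → ℝ) (Pi.single b 1))).comp F'' with hΨ
  have hΨval : ∀ a b u, Ψ a b u = F'' u (Pi.single b 1) a := fun a b u => rfl
  set M' : Fin d → Fin d → ((Fin d → ℝ) →L[ℝ] ℝ) := fun a b =>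
    if a = j then 0 else Ψ a b with hM'
  -- derivative of each adjugate entry
  have key : ∀ i : Fin d,
      fderiv ℝ (fun y => (Matrix.adjugate (jacobian f y)) i j) x =
        ∑ a, ∑ b, (((jacobian f x).updateRow j (Pi.single i 1)).updateRow a
          (Pi.single b 1)).det • M' a b := by
    intro i
    have hM : ∀ a b, HasFDerivAt
        (fun y => ((jacobian f y).updateRow j (Pi.single i 1)) a b) (M' a b) x := by
      intro a b
      rcases eq_or_ne a j with rfl | haj
      · simp only [hM', if_pos rfl]
        have : (fun y => ((jacobian f y).updateRow a (Pi.single i 1)) a b)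
            = fun _ : Fin d → ℝ => (Pi.single i 1 : Fin d → ℝ) b := by
          funext y; rw [Matrix.updateRow_apply, if_pos rfl]
        rw [this]
        exact hasFDerivAt_const _ _
      · simp only [hM', if_neg haj]
        have heq : (fun y => ((jacobian f y).updateRow j (Pi.single i 1)) a b)
            = fun y => (((ContinuousLinearMap.proj a).comp
                (ContinuousLinearMap.apply ℝ (Fin d → ℝ) (Pi.single b 1))))
                (fderiv ℝ f y) := by
          funext y
          rw [Matrix.updateRow_apply, if_neg haj]
          rfl
        rw [heq, hΨ]
        exact (((ContinuousLinearMap.proj a).comp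
          (ContinuousLinearMap.apply ℝ (Fin d → ℝ) (Pi.single b 1))).hasFDerivAt).comp x
          hFd.hasFDerivAt
    have hdet := hasFDerivAt_det_aux _ M' x hM
    have hfn : (fun y => (((jacobian f y).updateRow j (Pi.single i 1))).det)
        = fun y => (Matrix.adjugate (jacobian f y)) i j := by
      funext y; rw [Matrix.adjugate_apply]
    rw [hfn] at hdet
    exact hdet.fderiv
  -- assemble
  calc ∑ i, fderiv ℝ (fun y => (Matrix.adjugate (jacobian f y)) i j) x (Pi.single i 1)
      = ∑ i, ∑ a, ∑ b, (((jacobian f x).updateRow j (Pi.single i 1)).updateRow a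
          (Pi.single b 1)).det * (M' a b (Pi.single i 1)) := by
        refine Finset.sum_congr rfl fun i _ => ?_
        rw [key i]
        rw [ContinuousLinearMap.sum_apply]
        refine Finset.sum_congr rfl fun a _ => ?_
        rw [ContinuousLinearMap.sum_apply]
        refine Finset.sum_congr rfl fun b _ => ?_
        rw [ContinuousLinearMap.smul_apply, smul_eq_mul]
    _ = ∑ a, ∑ i, ∑ b, (((jacobian f x).updateRow j (Pi.single i 1)).updateRow a
          (Pi.single b 1)).det * (M' a b (Pi.single i 1)) := Finset.sum_comm
    _ = 0 := by
        refine Finset.sum_eq_zero fun a _ => ?_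
        rcases eq_or_ne a j with rfl | haj
        · refine Finset.sum_eq_zero fun i _ => Finset.sum_eq_zero fun b _ => ?_
          simp [M']
        · have := symAntisymCancel
            (fun i b => F'' (Pi.single i 1) (Pi.single b 1) a)
            (fun i b => (((jacobian f x).updateRow j (Pi.single i 1)).updateRow a
              (Pi.single b 1)).det)
            (fun i b => congrFun (hsym.eq (Pi.single i 1) (Pi.single b 1)) a)
            (fun i b => rowSwapDet _ (Ne.symm haj) _ _)
          rw [← this]
          refine Finset.sum_congr rfl fun i _ => Finset.sum_congr rfl fun b _ => ?_
          simp only [M']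
          rw [if_neg haj, hΨval, mul_comm]
end

section
/- Divergence identity for the Piola transform: Let d ≥ 1, let ψ : ℝ^d → ℝ^d be twice continuously differentiable and let v : ℝ^d → ℝ^d be continuously differentiable. Define the Piola transform v̂(x) = Adj(Dψ(x)) · v(ψ(x)). Then for every x ∈ ℝ^d, div v̂(x) = det(Dψ(x)) · (div v)(ψ(x)). -/
/-- The divergence of a vector field `v : ℝ^d → ℝ^d` at a point `x`:
`∑ i, ∂ v_i / ∂ x_i`. -/
noncomputable def vdiv {d : ℕ} (v : (Fin d → ℝ) → (Fin d → ℝ)) (x : Fin d → ℝ) : ℝ :=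
  ∑ i, fderiv ℝ (fun y => v y i) x (Pi.single i 1)


open Finset

/-- The determinant as a continuous multilinear map in the rows. -/
noncomputable def detCM (d : ℕ) :
    ContinuousMultilinearMap ℝ (fun _ : Fin d => (Fin d → ℝ)) ℝ :=
  MultilinearMap.mkContinuous
    ((Matrix.detRowAlternating : (Fin d → ℝ) [⋀^Fin d]→ₗ[ℝ] ℝ).toMultilinearMap)
    (Nat.factorial d) (by
      intro m
      have h1 : (Matrix.detRowAlternating (R := ℝ) (n := Fin d)).toMultilinearMap m
          = Matrix.det (Matrix.of m) := rfl
      rw [h1, Matrix.det_apply]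
      calc ‖∑ σ : Equiv.Perm (Fin d), Equiv.Perm.sign σ • ∏ i, Matrix.of m (σ i) i‖
          ≤ ∑ σ : Equiv.Perm (Fin d), ‖Equiv.Perm.sign σ • ∏ i, Matrix.of m (σ i) i‖ :=
            norm_sum_le _ _
        _ ≤ ∑ _σ : Equiv.Perm (Fin d), ∏ i, ‖m i‖ := by
            apply Finset.sum_le_sum
            intro σ _
            have h2 : ‖Equiv.Perm.sign σ • ∏ i, Matrix.of m (σ i) i‖
                = ‖∏ i, m (σ i) i‖ := by
              rcases Int.units_eq_one_or (Equiv.Perm.sign σ) with h | h <;>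
                simp [h, Matrix.of_apply]
            rw [h2]
            have h3 : ‖∏ i, m (σ i) i‖ ≤ ∏ i, ‖m (σ i)‖ := by
              rw [norm_prod]
              apply Finset.prod_le_prod (fun i _ => norm_nonneg _)
              intro i _
              exact norm_le_pi_norm (m (σ i)) i
            calc ‖∏ i, m (σ i) i‖ ≤ ∏ i, ‖m (σ i)‖ := h3
              _ = ∏ i, ‖m i‖ := Equiv.prod_comp σ (fun i => ‖m i‖)
        _ = (Nat.factorial d : ℝ) * ∏ i, ‖m i‖ := by
            rw [Finset.sum_const, Finset.card_univ, Fintype.card_perm, Fintype.card_fin,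
              nsmul_eq_mul])

lemma detCM_apply {d : ℕ} (m : Fin d → (Fin d → ℝ)) :
    detCM d m = Matrix.det (Matrix.of m) := rfl

/-- Expansion of a continuous linear map on `ℝ^d` over the standard basis. -/
lemma clm_pi_expand {d : ℕ} {F : Type*} [NormedAddCommGroup F] [NormedSpace ℝ F]
    (L : (Fin d → ℝ) →L[ℝ] F) (w : Fin d → ℝ) :
    L w = ∑ k, w k • L (Pi.single k 1) := by
  have hw : w = ∑ k, w k • (Pi.single k 1 : Fin d → ℝ) := by
    funext l
    simp [Pi.single_apply]
  conv_lhs => rw [hw]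
  rw [map_sum]
  simp only [map_smul]

lemma update_update_comp_swap {α : Type*} {d : ℕ} (u : Fin d → α) {j k : Fin d}
    (h : j ≠ k) (a b : α) :
    (Function.update (Function.update u j a) k b) ∘ Equiv.swap j k
      = Function.update (Function.update u j b) k a := by
  funext t
  simp only [Function.comp_apply]
  rcases eq_or_ne t j with rfl | htj
  · rw [Equiv.swap_apply_left, Function.update_self, Function.update_of_ne h,
      Function.update_self]
  · rcases eq_or_ne t k with rfl | htk
    · rw [Equiv.swap_apply_right, Function.update_of_ne h, Function.update_self,
        Function.update_self]
    · rw [Equiv.swap_apply_of_ne_of_ne htj htk, Function.update_of_ne htk,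
        Function.update_of_ne htj, Function.update_of_ne htk, Function.update_of_ne htj]

lemma sum_sym_antisym {d : ℕ} (c D : Fin d → Fin d → ℝ)
    (hc : ∀ i m, c i m = c m i) (hD : ∀ i m, D i m = - D m i) :
    ∑ i, ∑ m, c i m * D i m = 0 := by
  have h : (∑ i, ∑ m, c i m * D i m) = - ∑ i, ∑ m, c i m * D i m := by
    conv_lhs => rw [Finset.sum_comm]
    rw [← Finset.sum_neg_distrib]
    apply Finset.sum_congr rfl
    intro i _
    rw [← Finset.sum_neg_distrib]
    apply Finset.sum_congr rfl
    intro m _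
    rw [hc m i, hD m i]
    ring
  linarith

lemma detCM_update_sum {d : ℕ} (u : Fin d → (Fin d → ℝ)) (k : Fin d)
    {α : Type*} (t : Finset α) (g : α → (Fin d → ℝ)) :
    detCM d (Function.update u k (∑ a ∈ t, g a))
      = ∑ a ∈ t, detCM d (Function.update u k (g a)) :=
  (detCM d).toMultilinearMap.map_update_sum t k g u

lemma detCM_update_smul {d : ℕ} (u : Fin d → (Fin d → ℝ)) (k : Fin d)
    (c : ℝ) (w : Fin d → ℝ) :
    detCM d (Function.update u k (c • w)) = c * detCM d (Function.update u k w) :=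
  (detCM d).toMultilinearMap.map_update_smul u k c w

lemma detCM_update_zero {d : ℕ} (u : Fin d → (Fin d → ℝ)) (k : Fin d) :
    detCM d (Function.update u k 0) = 0 :=
  (detCM d).toMultilinearMap.map_update_zero u k

lemma detCM_eq_alt {d : ℕ} (m : Fin d → (Fin d → ℝ)) :
    detCM d m = Matrix.detRowAlternating m := rfl


/-- **Divergence identity for the Piola transform**: for `ψ : ℝ^d → ℝ^d` twice continuously
differentiable and `v : ℝ^d → ℝ^d` continuously differentiable, the Piola transform
`v̂(x) = Adj(Dψ(x)) · v(ψ(x))` satisfies `div v̂(x) = det(Dψ(x)) · (div v)(ψ(x))`. -/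
theorem piola_transform_div {d : ℕ} (hd : 1 ≤ d)
    (ψ v : (Fin d → ℝ) → (Fin d → ℝ))
    (hψ : ContDiff ℝ 2 ψ) (hv : ContDiff ℝ 1 v) :
    ∀ x : Fin d → ℝ,
      vdiv (fun y => (Matrix.adjugate (jacobian ψ y)).mulVec (v (ψ y))) x
        = (jacobian ψ x).det * vdiv v (ψ x) := by
  intro x
  classical
  have hψ1 : ContDiff ℝ 1 ψ := hψ.of_le one_le_two
  have hψd : Differentiable ℝ ψ := hψ1.differentiable one_ne_zero
  have hΦc : ContDiff ℝ 1 (fderiv ℝ ψ) := hψ.fderiv_right (by norm_num)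
  set Φ : (Fin d → ℝ) → ((Fin d → ℝ) →L[ℝ] (Fin d → ℝ)) := fderiv ℝ ψ with hΦdef
  have hHx : HasFDerivAt Φ (fderiv ℝ Φ x) x := ((hΦc.differentiable one_ne_zero) x).hasFDerivAt
  set H := fderiv ℝ Φ x with hHdef
  have hsymm : ∀ a b, H a b = H b a := fun a b =>
    second_derivative_symmetric (fun y => (hψd y).hasFDerivAt) hHx a b
  set G : Fin d → (((Fin d → ℝ) →L[ℝ] (Fin d → ℝ)) →L[ℝ] (Fin d → ℝ)) := fun k =>
    ContinuousLinearMap.pi (fun l => (ContinuousLinearMap.proj k).comp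
      (ContinuousLinearMap.apply ℝ (Fin d → ℝ) (Pi.single l 1))) with hGdef
  have hGapply : ∀ k (L : (Fin d → ℝ) →L[ℝ] (Fin d → ℝ)),
      G k L = fun l => L (Pi.single l 1) k := fun k L => rfl
  have hjacrow : ∀ (y : Fin d → ℝ) (k : Fin d), (jacobian ψ y) k = G k (Φ y) :=
    fun y k => rfl
  have hrowk : ∀ k, HasFDerivAt (fun y => (jacobian ψ y) k) ((G k).comp H) x := by
    intro k
    have h := ((G k).hasFDerivAt (x := Φ x)).comp x hHx
    have he : (fun y => (jacobian ψ y) k) = fun y => G k (Φ y) :=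
      funext fun y => hjacrow y k
    rw [he]; exact h
  -- derivative of the adjugate entries
  have hAdjE : ∀ (i j : Fin d), HasFDerivAt (fun y => Matrix.adjugate (jacobian ψ y) i j)
      (((detCM d).linearDeriv
          (Function.update (fun k => (jacobian ψ x) k) j (Pi.single i 1))).comp
        (ContinuousLinearMap.pi (fun k => if k = j then 0 else (G k).comp H))) x := by
    intro i j
    have hrows : HasFDerivAt
        (fun y => Function.update (fun k => (jacobian ψ y) k) j (Pi.single i 1))
        (ContinuousLinearMap.pi (fun k => if k = j then 0 else (G k).comp H)) x := by
      have hfun : (fun y => Function.update (fun k => (jacobian ψ y) k) j (Pi.single i 1))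
          = fun y k => if k = j then Pi.single i 1 else (jacobian ψ y) k := by
        funext y k; rw [Function.update_apply]
      rw [hfun]
      apply hasFDerivAt_pi.2
      intro k
      by_cases hk : k = j
      · subst hk
        simp only [if_pos rfl]
        exact hasFDerivAt_const _ _
      · simp only [if_neg hk]
        exact hrowk k
    have hdet := ((detCM d).hasFDerivAt
      (x := Function.update (fun k => (jacobian ψ x) k) j (Pi.single i 1))).comp x hrows
    have he : (fun y => Matrix.adjugate (jacobian ψ y) i j)
        = fun y => detCM d (Function.update (fun k => (jacobian ψ y) k) j (Pi.single i 1)) := by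
      funext y
      rw [Matrix.adjugate_apply, detCM_apply]
      rfl
    rw [he]; exact hdet
  -- the Piola identity: the divergence of each column of the adjugate vanishes
  have hPiola : ∀ j : Fin d,
      ∑ i, fderiv ℝ (fun y => Matrix.adjugate (jacobian ψ y) i j) x (Pi.single i 1) = 0 := by
    intro j
    have hterm : ∀ i : Fin d,
        fderiv ℝ (fun y => Matrix.adjugate (jacobian ψ y) i j) x (Pi.single i 1)
          = ∑ k, detCM d (Function.update
              (Function.update (fun k' => (jacobian ψ x) k') j (Pi.single i 1)) k
              ((if k = j then (0 : (Fin d → ℝ) →L[ℝ] (Fin d → ℝ)) else (G k).comp H)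
                (Pi.single i 1))) := by
      intro i
      rw [(hAdjE i j).fderiv]
      rw [ContinuousLinearMap.comp_apply, ContinuousMultilinearMap.linearDeriv_apply]
      apply Finset.sum_congr rfl
      intro k _
      congr 1
    rw [Finset.sum_congr rfl (fun i _ => hterm i), Finset.sum_comm]
    apply Finset.sum_eq_zero
    intro k _
    by_cases hk : k = j
    · subst hk
      apply Finset.sum_eq_zero
      intro i _
      simp only [if_pos rfl, ContinuousLinearMap.zero_apply]
      exact detCM_update_zero _ _
    · -- expand the second-derivative row over the standard basis
      have hexp : ∀ i : Fin d,
          detCM d (Function.update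
              (Function.update (fun k' => (jacobian ψ x) k') j (Pi.single i 1)) k
              ((if k = j then (0 : (Fin d → ℝ) →L[ℝ] (Fin d → ℝ)) else (G k).comp H)
                (Pi.single i 1)))
            = ∑ m, (H (Pi.single i 1) (Pi.single m 1) k) *
                detCM d (Function.update
                  (Function.update (fun k' => (jacobian ψ x) k') j (Pi.single i 1)) k
                  (Pi.single m 1)) := by
        intro i
        rw [if_neg hk]
        have hw : (((G k).comp H) (Pi.single i 1) : Fin d → ℝ)
            = ∑ m, (H (Pi.single i 1) (Pi.single m 1) k) • (Pi.single m 1 : Fin d → ℝ) := by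
          rw [ContinuousLinearMap.comp_apply, hGapply]
          funext l
          simp [Pi.single_apply]
        rw [hw, detCM_update_sum]
        apply Finset.sum_congr rfl
        intro m _
        rw [detCM_update_smul]
      rw [Finset.sum_congr rfl (fun i _ => hexp i)]
      apply sum_sym_antisym
      · intro i m
        rw [hsymm]
      · intro i m
        have hswap := Matrix.detRowAlternating.map_swap
          (v := Function.update
            (Function.update (fun k' => (jacobian ψ x) k') j (Pi.single i 1)) k
            (Pi.single m 1)) (Ne.symm hk)
        rw [update_update_comp_swap _ (Ne.symm hk)] at hswap
        rw [detCM_eq_alt, detCM_eq_alt]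
        linarith [hswap]
  -- assembling everything
  have hv1d : Differentiable ℝ v := hv.differentiable one_ne_zero
  set Dv := fderiv ℝ v (ψ x) with hDvdef
  have hvx : HasFDerivAt v Dv (ψ x) := (hv1d (ψ x)).hasFDerivAt
  have hψx : HasFDerivAt ψ (Φ x) x := (hψd x).hasFDerivAt
  have hvj : ∀ j, HasFDerivAt (fun z => v z j) ((ContinuousLinearMap.proj j).comp Dv) (ψ x) :=
    fun j => hasFDerivAt_pi'.1 hvx j
  have hvcomp : ∀ j, HasFDerivAt (fun y => v (ψ y) j)
      (((ContinuousLinearMap.proj j).comp Dv).comp (Φ x)) x := fun j => (hvj j).comp x hψx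
  have hprod : ∀ i j, HasFDerivAt (fun y => Matrix.adjugate (jacobian ψ y) i j * v (ψ y) j)
      ((Matrix.adjugate (jacobian ψ x) i j) • (((ContinuousLinearMap.proj j).comp Dv).comp (Φ x))
        + (v (ψ x) j) • (fderiv ℝ (fun y => Matrix.adjugate (jacobian ψ y) i j) x)) x := by
    intro i j
    have h1 := (hAdjE i j).mul (hvcomp j)
    rw [(hAdjE i j).fderiv]
    exact h1
  have hFi : ∀ i, HasFDerivAt (fun y => (Matrix.adjugate (jacobian ψ y)).mulVec (v (ψ y)) i)
      (∑ j, ((Matrix.adjugate (jacobian ψ x) i j) •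
          (((ContinuousLinearMap.proj j).comp Dv).comp (Φ x))
        + (v (ψ x) j) • (fderiv ℝ (fun y => Matrix.adjugate (jacobian ψ y) i j) x))) x := by
    intro i
    have he : (fun y => (Matrix.adjugate (jacobian ψ y)).mulVec (v (ψ y)) i)
        = fun y => ∑ j, Matrix.adjugate (jacobian ψ y) i j * v (ψ y) j := by
      funext y; simp [Matrix.mulVec, dotProduct]
    rw [he]
    exact HasFDerivAt.fun_sum (fun j _ => hprod i j)
  have hLHS : vdiv (fun y => (Matrix.adjugate (jacobian ψ y)).mulVec (v (ψ y))) x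
      = ∑ i, ∑ j, (Matrix.adjugate (jacobian ψ x) i j *
            (((ContinuousLinearMap.proj j).comp Dv).comp (Φ x)) (Pi.single i 1)
          + v (ψ x) j * fderiv ℝ (fun y => Matrix.adjugate (jacobian ψ y) i j) x
              (Pi.single i 1)) := by
    simp only [vdiv]
    apply Finset.sum_congr rfl
    intro i _
    rw [(hFi i).fderiv, ContinuousLinearMap.sum_apply]
    apply Finset.sum_congr rfl
    intro j _
    rw [ContinuousLinearMap.add_apply, ContinuousLinearMap.smul_apply,
      ContinuousLinearMap.smul_apply, smul_eq_mul, smul_eq_mul]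
  rw [hLHS]
  have h2nd : ∑ i, ∑ j, v (ψ x) j *
      fderiv ℝ (fun y => Matrix.adjugate (jacobian ψ y) i j) x (Pi.single i 1) = 0 := by
    rw [Finset.sum_comm]
    apply Finset.sum_eq_zero
    intro j _
    rw [← Finset.mul_sum, hPiola j, mul_zero]
  have hDvexp : ∀ (w : Fin d → ℝ) (j : Fin d), Dv w j = ∑ k, w k * Dv (Pi.single k 1) j := by
    intro w j
    have h := congrFun (clm_pi_expand Dv w) j
    rw [h, Finset.sum_apply]
    apply Finset.sum_congr rfl
    intro k _
    rw [Pi.smul_apply, smul_eq_mul]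
  have hPhi : ∀ i k, Φ x (Pi.single i 1) k = jacobian ψ x k i := fun i k => rfl
  have h1st : ∑ i, ∑ j, Matrix.adjugate (jacobian ψ x) i j *
        (((ContinuousLinearMap.proj j).comp Dv).comp (Φ x)) (Pi.single i 1)
      = (jacobian ψ x).det * ∑ j, Dv (Pi.single j 1) j := by
    have hstep : ∀ i j : Fin d, Matrix.adjugate (jacobian ψ x) i j *
          (((ContinuousLinearMap.proj j).comp Dv).comp (Φ x)) (Pi.single i 1)
        = ∑ k, jacobian ψ x k i * Matrix.adjugate (jacobian ψ x) i j * Dv (Pi.single k 1) j := by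
      intro i j
      have : (((ContinuousLinearMap.proj j).comp Dv).comp (Φ x)) (Pi.single i 1)
          = Dv (Φ x (Pi.single i 1)) j := rfl
      rw [this, hDvexp (Φ x (Pi.single i 1)) j, Finset.mul_sum]
      apply Finset.sum_congr rfl
      intro k _
      rw [hPhi i k]
      ring
    rw [Finset.sum_congr rfl (fun i _ => Finset.sum_congr rfl (fun j _ => hstep i j))]
    rw [Finset.sum_comm]
    rw [Finset.mul_sum]
    apply Finset.sum_congr rfl
    intro j _
    rw [Finset.sum_comm]
    have : ∀ k, (∑ i, jacobian ψ x k i * Matrix.adjugate (jacobian ψ x) i j *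
          Dv (Pi.single k 1) j)
        = ((jacobian ψ x) * Matrix.adjugate (jacobian ψ x)) k j * Dv (Pi.single k 1) j := by
      intro k
      rw [Matrix.mul_apply, Finset.sum_mul]
    rw [Finset.sum_congr rfl (fun k _ => this k)]
    rw [Matrix.mul_adjugate]
    have h1 : ∀ k, ((jacobian ψ x).det • (1 : Matrix (Fin d) (Fin d) ℝ)) k j *
          Dv (Pi.single k 1) j
        = (if k = j then (jacobian ψ x).det * Dv (Pi.single j 1) j else 0) := by
      intro k
      rw [Matrix.smul_apply, Matrix.one_apply, smul_eq_mul]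
      by_cases hkj : k = j
      · subst hkj; simp
      · simp [hkj]
    rw [Finset.sum_congr rfl (fun k _ => h1 k), Finset.sum_ite_eq' Finset.univ j]
    simp
  have hvdivv : vdiv v (ψ x) = ∑ j, Dv (Pi.single j 1) j := by
    simp only [vdiv]
    apply Finset.sum_congr rfl
    intro j _
    rw [(hvj j).fderiv]
    rfl
  simp only [Finset.sum_add_distrib]
  rw [h2nd, add_zero, h1st, hvdivv]
end

section
/- ε-scaled Poincaré inequality in a periodically perforated domain: Let d, m ≥ 1, let Y = (0,1)^d be the unit cell and let Y^s ⊂ Y be a measurable set of positive Lebesgue measure (the solid part of the cell). Then there exists a constant c_P > 0, depending only on Y^s, such that for every ε > 0, every finite set K ⊂ ℤ^d, and every continuously differentiable function v : ℝ^d → ℝ^m that vanishes on ⋃_{k∈K} ε(k + Y^s), one has ∫_{Ω_{K,ε}} |v(x)|² dx ≤ c_P² · ε² · ∫_{Ω_{K,ε}} ‖Dv(x)‖² dx, where Ω_{K,ε} = ⋃_{k∈K} ε(k + Y). -/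
open MeasureTheory

/-- The open unit cell `Y = (0,1)^d` in `ℝ^d`. -/
def unitCell (d : ℕ) : Set (Fin d → ℝ) :=
  Set.pi Set.univ fun _ => Set.Ioo (0 : ℝ) 1

/-- The `ε`-scaled translated copy `ε(k + S)` of a set `S ⊆ ℝ^d`, for `k ∈ ℤ^d`. -/
def scaledCell {d : ℕ} (ε : ℝ) (k : Fin d → ℤ) (S : Set (Fin d → ℝ)) :
    Set (Fin d → ℝ) :=
  (fun y => ε • ((fun i => (k i : ℝ)) + y)) '' S

open Set ENNReal


/-- Cauchy–Schwarz on `[0,1]`. -/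
lemma sq_intInt_le (h : ℝ → ℝ) (hc : Continuous h) :
    (∫ t in (0:ℝ)..1, h t) ^ 2 ≤ ∫ t in (0:ℝ)..1, (h t) ^ 2 := by
  set I := ∫ t in (0:ℝ)..1, h t with hI
  have h1 : IntervalIntegrable h volume 0 1 := hc.intervalIntegrable 0 1
  have h2 : IntervalIntegrable (fun t => (h t) ^ 2) volume 0 1 :=
    (hc.pow 2).intervalIntegrable 0 1
  have key : (0:ℝ) ≤ ∫ t in (0:ℝ)..1, (h t - I) ^ 2 :=
    intervalIntegral.integral_nonneg (by norm_num) (fun t _ => sq_nonneg _)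
  have expand : ∫ t in (0:ℝ)..1, (h t - I) ^ 2
      = (∫ t in (0:ℝ)..1, (h t) ^ 2) - 2 * I * I + I ^ 2 := by
    have : ∀ t : ℝ, (h t - I) ^ 2 = (h t) ^ 2 - (2 * I) * h t + I ^ 2 := by
      intro t; ring
    simp_rw [this]
    rw [intervalIntegral.integral_add (h2.sub (h1.const_mul (2 * I)))
        (intervalIntegrable_const),
      intervalIntegral.integral_sub h2 (h1.const_mul (2 * I)),
      intervalIntegral.integral_const_mul, intervalIntegral.integral_const]
    simp [← hI]
  nlinarith [key, expand]

variable {d m : ℕ}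

/-- sum of squared partial derivatives (Frobenius norm squared), component form. -/
noncomputable def Gsq (v : (Fin d → ℝ) → (Fin m → ℝ)) (x : Fin d → ℝ) : ℝ :=
  ∑ i, ∑ j, (fderiv ℝ (fun z => v z i) x (Pi.single j 1)) ^ 2

lemma Gsq_nonneg (v : (Fin d → ℝ) → (Fin m → ℝ)) (x : Fin d → ℝ) : 0 ≤ Gsq v x :=
  Finset.sum_nonneg fun _ _ => Finset.sum_nonneg fun _ _ => sq_nonneg _

lemma contDiff_comp_proj {v : (Fin d → ℝ) → (Fin m → ℝ)} (hv : ContDiff ℝ 1 v) (i : Fin m) :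
    ContDiff ℝ 1 (fun z => v z i) :=
  ((ContinuousLinearMap.proj i : (Fin m → ℝ) →L[ℝ] ℝ).contDiff).comp hv

lemma continuous_fderiv_apply {v : (Fin d → ℝ) → (Fin m → ℝ)} (hv : ContDiff ℝ 1 v)
    (i : Fin m) (w : Fin d → ℝ) :
    Continuous (fun x => fderiv ℝ (fun z => v z i) x w) :=
  (((contDiff_comp_proj hv i).continuous_fderiv one_ne_zero).clm_apply continuous_const)

lemma continuous_Gsq {v : (Fin d → ℝ) → (Fin m → ℝ)} (hv : ContDiff ℝ 1 v) :
    Continuous (Gsq v) := by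
  refine continuous_finset_sum _ (fun i _ => continuous_finset_sum _ (fun j _ => ?_))
  exact (continuous_fderiv_apply hv i _).pow 2

/-- decomposition of a vector in the `Pi.single` basis applied to a CLM -/
lemma clm_apply_eq_sum (L : (Fin d → ℝ) →L[ℝ] ℝ) (w : Fin d → ℝ) :
    L w = ∑ j, w j * L (Pi.single j 1) := by
  have hw : w = ∑ j, w j • (Pi.single j 1 : Fin d → ℝ) := by
    funext i
    simp [Finset.sum_apply, Pi.single_apply]
  conv_lhs => rw [hw]
  rw [map_sum]
  simp [smul_eq_mul]

/-- pointwise FTC bound -/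
lemma pointwise_bound {v : (Fin d → ℝ) → (Fin m → ℝ)} (hv : ContDiff ℝ 1 v)
    {x y : Fin d → ℝ} (hxy : ∀ j, (x j - y j) ^ 2 ≤ 1) (hvy : v y = 0) :
    ∑ i, (v x i) ^ 2 ≤ d * ∫ t in (0:ℝ)..1, Gsq v (y + t • (x - y)) := by
  set c : ℝ → (Fin d → ℝ) := fun t => y + t • (x - y) with hc
  have hccont : Continuous c := by fun_prop
  -- derivative of t ↦ v (c t) i
  have hder : ∀ (i : Fin m) (t : ℝ),
      HasDerivAt (fun s => v (c s) i) (fderiv ℝ (fun z => v z i) (c t) (x - y)) t := by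
    intro i t
    have hcder : HasDerivAt c (x - y) t := by
      have h1 : HasDerivAt (fun s : ℝ => s • (x - y)) ((1:ℝ) • (x - y)) t :=
        (hasDerivAt_id t).smul_const (x - y)
      simpa [hc, one_smul] using h1.const_add y
    exact (((contDiff_comp_proj hv i).differentiable one_ne_zero) (c t)).hasFDerivAt.comp_hasDerivAt
      t hcder
  have hψcont : ∀ i : Fin m, Continuous (fun t => fderiv ℝ (fun z => v z i) (c t) (x - y)) := by
    intro i
    exact (((contDiff_comp_proj hv i).continuous_fderiv one_ne_zero).comp hccont).clm_apply
      continuous_const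
  have hftc : ∀ i : Fin m, v x i = ∫ t in (0:ℝ)..1,
      fderiv ℝ (fun z => v z i) (c t) (x - y) := by
    intro i
    have := intervalIntegral.integral_eq_sub_of_hasDerivAt
      (f := fun s => v (c s) i) (fun t _ => hder i t) ((hψcont i).intervalIntegrable 0 1)
    have hc1 : c 1 = x := by simp [hc]
    have hc0 : c 0 = y := by simp [hc]
    simp only [hc1, hc0, hvy, Pi.zero_apply, sub_zero] at this
    exact this.symm
  -- bound each component
  have hcomp : ∀ i : Fin m, (v x i) ^ 2 ≤
      ∫ t in (0:ℝ)..1, (d : ℝ) * ∑ j, (fderiv ℝ (fun z => v z i) (c t) (Pi.single j 1)) ^ 2 := by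
    intro i
    have h1 : (v x i) ^ 2 ≤ ∫ t in (0:ℝ)..1,
        (fderiv ℝ (fun z => v z i) (c t) (x - y)) ^ 2 := by
      rw [hftc i]; exact sq_intInt_le _ (hψcont i)
    refine h1.trans (intervalIntegral.integral_mono_on (by norm_num)
      (((hψcont i).pow 2).intervalIntegrable 0 1)
      ((Continuous.intervalIntegrable (by
        refine continuous_const.mul (continuous_finset_sum _ (fun j _ => ?_))
        exact ((((contDiff_comp_proj hv i).continuous_fderiv one_ne_zero).comp hccont).clm_apply
          continuous_const).pow 2) 0 1)) (fun t _ => ?_))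
    -- Cauchy–Schwarz on the finite sum
    rw [clm_apply_eq_sum]
    calc (∑ j, (x j - y j) * fderiv ℝ (fun z => v z i) (c t) (Pi.single j 1)) ^ 2
        ≤ (∑ j, (x j - y j) ^ 2) *
          ∑ j, (fderiv ℝ (fun z => v z i) (c t) (Pi.single j 1)) ^ 2 :=
          Finset.sum_mul_sq_le_sq_mul_sq _ _ _
      _ ≤ (d : ℝ) * ∑ j, (fderiv ℝ (fun z => v z i) (c t) (Pi.single j 1)) ^ 2 := by
          refine mul_le_mul_of_nonneg_right ?_
            (Finset.sum_nonneg fun _ _ => sq_nonneg _)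
          calc (∑ j, (x j - y j) ^ 2) ≤ ∑ _j : Fin d, (1:ℝ) :=
            Finset.sum_le_sum (fun j _ => hxy j)
          _ = d := by simp
  calc ∑ i, (v x i) ^ 2
      ≤ ∑ i, ∫ t in (0:ℝ)..1,
        (d:ℝ) * ∑ j, (fderiv ℝ (fun z => v z i) (c t) (Pi.single j 1)) ^ 2 :=
        Finset.sum_le_sum fun i _ => hcomp i
    _ = ∫ t in (0:ℝ)..1, ∑ i,
        (d:ℝ) * ∑ j, (fderiv ℝ (fun z => v z i) (c t) (Pi.single j 1)) ^ 2 := by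
        rw [intervalIntegral.integral_finset_sum]
        intro i _
        refine Continuous.intervalIntegrable ?_ 0 1
        refine continuous_const.mul (continuous_finset_sum _ (fun j _ => ?_))
        exact ((((contDiff_comp_proj hv i).continuous_fderiv one_ne_zero).comp hccont).clm_apply
          continuous_const).pow 2
    _ = d * ∫ t in (0:ℝ)..1, Gsq v (y + t • (x - y)) := by
        rw [← intervalIntegral.integral_const_mul]
        congr 1
        funext t
        simp [Gsq, Finset.mul_sum, hc]

lemma map_affine (a : Fin d → ℝ) {t : ℝ} (ht : t ≠ 0) :
    Measure.map (fun x : Fin d → ℝ => a + t • x) volume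
      = ENNReal.ofReal |(t ^ d)⁻¹| • volume := by
  have h : (fun x : Fin d → ℝ => a + t • x) = (fun x => a + x) ∘ (fun x : Fin d → ℝ => t • x) :=
    rfl
  rw [h, ← Measure.map_map (measurable_const_add a) (measurable_const_smul t)]
  have := Measure.map_addHaar_smul (volume : Measure (Fin d → ℝ)) ht
  rw [show ((t • ·) : (Fin d → ℝ) → (Fin d → ℝ)) = fun x : Fin d → ℝ => t • x from rfl] at this
  rw [this, Measure.map_smul, map_add_left_eq_self, Module.finrank_fin_fun]

lemma lintegral_comp_affine_le {Φ : (Fin d → ℝ) → ℝ≥0∞} (hΦ : Measurable Φ)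
    {A B : Set (Fin d → ℝ)} (hA : MeasurableSet A) (hB : MeasurableSet B)
    (a : Fin d → ℝ) {t : ℝ} (ht1 : 1/2 ≤ t) (ht2 : t ≤ 1)
    (him : (fun x => a + t • x) '' A ⊆ B) :
    ∫⁻ x in A, Φ (a + t • x) ≤ 2 ^ d * ∫⁻ z in B, Φ z := by
  have ht0 : (0:ℝ) < t := lt_of_lt_of_le (by norm_num) ht1
  set T : (Fin d → ℝ) → (Fin d → ℝ) := fun x => a + t • x with hT
  have hTmeas : Measurable T := (measurable_const_smul t).const_add a
  have hTim : MeasurableSet (T '' A) := by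
    have : T '' A = (fun z : Fin d → ℝ => t⁻¹ • (z - a)) ⁻¹' A := by
      ext z
      constructor
      · rintro ⟨x, hx, rfl⟩
        simpa [hT, smul_smul, inv_mul_cancel₀ ht0.ne'] using hx
      · intro hz
        exact ⟨t⁻¹ • (z - a), hz, by simp [hT, smul_smul, mul_inv_cancel₀ ht0.ne']⟩
    rw [this]
    exact hA.preimage ((measurable_id.sub_const a).const_smul t⁻¹)
  have hind : A.indicator (fun x => Φ (T x)) = fun x => (T '' A).indicator Φ (T x) := by
    funext x
    by_cases hx : x ∈ A
    · simp [indicator_of_mem hx, indicator_of_mem (mem_image_of_mem T hx)]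
    · have hTx : T x ∉ T '' A := by
        rintro ⟨x', hx', hxx⟩
        have : x' = x := by
          have := congrArg (fun z => t⁻¹ • (z - a)) hxx
          simpa [hT, smul_smul, inv_mul_cancel₀ ht0.ne'] using this
        exact hx (this ▸ hx')
      simp [indicator_of_notMem hx, indicator_of_notMem hTx]
  calc ∫⁻ x in A, Φ (T x)
      = ∫⁻ x, A.indicator (fun x => Φ (T x)) x := (lintegral_indicator hA _).symm
    _ = ∫⁻ x, (T '' A).indicator Φ (T x) := by rw [hind]
    _ = ∫⁻ z, (T '' A).indicator Φ z ∂(Measure.map T volume) :=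
        (lintegral_map (hΦ.indicator hTim) hTmeas).symm
    _ = ENNReal.ofReal |(t ^ d)⁻¹| * ∫⁻ z, (T '' A).indicator Φ z := by
        rw [hT, map_affine a ht0.ne', lintegral_smul_measure, smul_eq_mul]
    _ ≤ 2 ^ d * ∫⁻ z, B.indicator Φ z := by
        refine mul_le_mul' ?_ (lintegral_mono ?_)
        · have h1 : |(t ^ d)⁻¹| = (t ^ d)⁻¹ := abs_of_nonneg (by positivity)
          have h2 : ((1:ℝ)/2) ^ d ≤ t ^ d := pow_le_pow_left₀ (by norm_num) ht1 d
          have h3 : (t ^ d)⁻¹ ≤ ((2:ℝ)) ^ d := by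
            rw [← one_div, div_le_iff₀ (by positivity)]
            calc (1:ℝ) = (1/2) ^ d * 2 ^ d := by
                  rw [div_pow, one_pow, div_mul_cancel₀]; positivity
              _ ≤ 2 ^ d * t ^ d := by rw [mul_comm]; exact mul_le_mul_of_nonneg_left h2 (by positivity)
          calc ENNReal.ofReal |(t ^ d)⁻¹| ≤ ENNReal.ofReal ((2:ℝ) ^ d) := by
                rw [h1]; exact ENNReal.ofReal_le_ofReal h3
            _ = 2 ^ d := by
                rw [ENNReal.ofReal_pow (by norm_num)]
                norm_num
        · exact indicator_le_indicator_of_subset him (fun _ => by simp)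
    _ = 2 ^ d * ∫⁻ z in B, Φ z := by rw [lintegral_indicator hB]

section CellPoincare

variable {d : ℕ}

lemma unitCell_measurable : MeasurableSet (unitCell d) :=
  MeasurableSet.univ_pi fun _ => measurableSet_Ioo

lemma unitCell_volume : volume (unitCell d) = 1 := by
  rw [unitCell, volume_pi_pi]
  simp

lemma unitCell_convex : Convex ℝ (unitCell d) :=
  convex_pi fun _ _ => convex_Ioo 0 1

lemma unitCell_subset_Icc : unitCell d ⊆ Set.Icc (0 : Fin d → ℝ) 1 := by
  rw [← Set.pi_univ_Icc]
  exact Set.pi_mono fun i _ => Set.Ioo_subset_Icc_self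

lemma cell_poincare (hd : 1 ≤ d) {m : ℕ} (Ys : Set (Fin d → ℝ)) (hYsub : Ys ⊆ unitCell d)
    (hYmeas : MeasurableSet Ys) (hYpos : 0 < volume Ys)
    (v : (Fin d → ℝ) → (Fin m → ℝ)) (hv : ContDiff ℝ 1 v) (hv0 : ∀ y ∈ Ys, v y = 0) :
    ∫ x in unitCell d, ∑ i, (v x i) ^ 2
      ≤ ((d : ℝ) * 2 ^ d / (volume Ys).toReal) * ∫ x in unitCell d, Gsq v x := by
  set Y := unitCell d with hY
  have hYm : MeasurableSet Y := unitCell_measurable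
  have hY1 : volume Y = 1 := unitCell_volume
  have hYconv : Convex ℝ Y := unitCell_convex
  have hYIcc : Y ⊆ Set.Icc (0 : Fin d → ℝ) 1 := unitCell_subset_Icc
  have hμle1 : volume Ys ≤ 1 := le_trans (measure_mono hYsub) hY1.le
  have hμne : volume Ys ≠ ∞ := (lt_of_le_of_lt hμle1 ENNReal.one_lt_top).ne
  set F : (Fin d → ℝ) → ℝ := fun x => ∑ i, (v x i) ^ 2 with hF
  have hFcont : Continuous F := by
    refine continuous_finset_sum _ fun i _ => ?_
    exact ((continuous_apply i).comp hv.continuous).pow 2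
  have hFnn : ∀ x, 0 ≤ F x := fun x => Finset.sum_nonneg fun _ _ => sq_nonneg _
  have hGcont : Continuous (Gsq v) := continuous_Gsq hv
  set Φ : (Fin d → ℝ) → ℝ≥0∞ := fun z => ENNReal.ofReal (Gsq v z) with hΦdef
  have hΦ : Measurable Φ := hGcont.measurable.ennreal_ofReal
  have hFint : IntegrableOn F Y volume := (hFcont.integrableOn_Icc).mono_set hYIcc
  have hGint : IntegrableOn (Gsq v) Y volume := (hGcont.integrableOn_Icc).mono_set hYIcc
  set L : ℝ≥0∞ := ∫⁻ z in Y, Φ z with hLdef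
  have hLeq : ENNReal.ofReal (∫ x in Y, Gsq v x) = L :=
    ofReal_integral_eq_lintegral_ofReal hGint
      (Filter.Eventually.of_forall fun x => Gsq_nonneg v x)
  have hLne : L ≠ ∞ := hLeq ▸ ENNReal.ofReal_ne_top
  have hFeq : ENNReal.ofReal (∫ x in Y, F x) = ∫⁻ x in Y, ENNReal.ofReal (F x) :=
    ofReal_integral_eq_lintegral_ofReal hFint (Filter.Eventually.of_forall fun x => hFnn x)
  -- pointwise bound
  have hpt : ∀ x ∈ Y, ∀ y ∈ Ys, ENNReal.ofReal (F x)
      ≤ (d : ℝ≥0∞) * ∫⁻ t in Set.Ioo (0:ℝ) 1, Φ (y + t • (x - y)) := by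
    intro x hx y hy
    have hxY : ∀ j, x j ∈ Set.Ioo (0:ℝ) 1 := fun j => hx j (Set.mem_univ j)
    have hyY : ∀ j, y j ∈ Set.Ioo (0:ℝ) 1 := fun j => hYsub hy j (Set.mem_univ j)
    have hxy : ∀ j, (x j - y j) ^ 2 ≤ 1 := by
      intro j
      have h1 := hxY j; have h2 := hyY j
      rw [Set.mem_Ioo] at h1 h2
      nlinarith [h1.1, h1.2, h2.1, h2.2]
    have hb := pointwise_bound hv hxy (hv0 y hy)
    have hintc : IntegrableOn (fun t : ℝ => Gsq v (y + t • (x - y))) (Set.Ioo 0 1) volume := by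
      have : Continuous fun t : ℝ => Gsq v (y + t • (x - y)) := by fun_prop
      exact this.integrableOn_Icc.mono_set Set.Ioo_subset_Icc_self
    have heq2 : ENNReal.ofReal (∫ t in (0:ℝ)..1, Gsq v (y + t • (x - y)))
        = ∫⁻ t in Set.Ioo (0:ℝ) 1, Φ (y + t • (x - y)) := by
      rw [intervalIntegral.integral_of_le zero_le_one, integral_Ioc_eq_integral_Ioo]
      exact ofReal_integral_eq_lintegral_ofReal hintc
        (Filter.Eventually.of_forall fun t => Gsq_nonneg v _)
    calc ENNReal.ofReal (F x)
        ≤ ENNReal.ofReal ((d : ℝ) * ∫ t in (0:ℝ)..1, Gsq v (y + t • (x - y))) :=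
          ENNReal.ofReal_le_ofReal hb
      _ = (d : ℝ≥0∞) * ∫⁻ t in Set.Ioo (0:ℝ) 1, Φ (y + t • (x - y)) := by
          rw [ENNReal.ofReal_mul (by positivity), heq2, ENNReal.ofReal_natCast]
  -- measurability helpers
  have hbase : ∀ x : Fin d → ℝ,
      Measurable (fun p : (Fin d → ℝ) × ℝ => Φ (p.1 + p.2 • (x - p.1))) := by
    intro x
    exact hΦ.comp (by fun_prop)
  have hmeas_t : ∀ (x : Fin d → ℝ) (s : Set ℝ),
      Measurable (fun y => ∫⁻ t in s, Φ (y + t • (x - y))) := by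
    intro x s
    exact (hbase x).lintegral_prod_right'
  have hbase2 : ∀ s : Set ℝ, Measurable (fun p : ((Fin d → ℝ) × (Fin d → ℝ)) =>
      ∫⁻ t in s, Φ (p.2 + t • (p.1 - p.2))) := by
    intro s
    have : Measurable (fun q : ((Fin d → ℝ) × (Fin d → ℝ)) × ℝ =>
        Φ (q.1.2 + q.2 • (q.1.1 - q.1.2))) := hΦ.comp (by fun_prop)
    exact this.lintegral_prod_right'
  have hmeas_yt : ∀ s : Set ℝ, Measurable (fun x => ∫⁻ y in Ys,
      ∫⁻ t in s, Φ (y + t • (x - y))) := by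
    intro s
    exact (hbase2 s).lintegral_prod_right'
  -- integrate the pointwise bound
  have step2 : (∫⁻ x in Y, ENNReal.ofReal (F x)) * volume Ys
      ≤ (d : ℝ≥0∞) * ∫⁻ x in Y, ∫⁻ y in Ys, ∫⁻ t in Set.Ioo (0:ℝ) 1,
          Φ (y + t • (x - y)) := by
    rw [← lintegral_mul_const _ (hFcont.measurable.ennreal_ofReal)]
    rw [← lintegral_const_mul _ (hmeas_yt (Set.Ioo 0 1))]
    refine setLIntegral_mono ((hmeas_yt (Set.Ioo 0 1)).const_mul _) (fun x hx => ?_)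
    calc ENNReal.ofReal (F x) * volume Ys
        = ∫⁻ _ in Ys, ENNReal.ofReal (F x) := (setLIntegral_const _ _).symm
      _ ≤ ∫⁻ y in Ys, (d : ℝ≥0∞) * ∫⁻ t in Set.Ioo (0:ℝ) 1, Φ (y + t • (x - y)) :=
          setLIntegral_mono ((hmeas_t x _).const_mul _) (fun y hy => hpt x hx y hy)
      _ = (d : ℝ≥0∞) * ∫⁻ y in Ys, ∫⁻ t in Set.Ioo (0:ℝ) 1, Φ (y + t • (x - y)) :=
          lintegral_const_mul _ (hmeas_t x _)
  -- key geometric bounds for the two halves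
  have half1 : ∀ x ∈ Y, ∀ t ∈ Set.Ioo (0:ℝ) (1/2),
      ∫⁻ y in Ys, Φ (y + t • (x - y)) ≤ 2 ^ d * L := by
    intro x hx t ht
    have heq : (fun y : Fin d → ℝ => y + t • (x - y)) = fun y => (t • x) + (1 - t) • y := by
      funext y
      simp only [smul_sub, sub_smul, one_smul]
      abel
    rw [show (∫⁻ y in Ys, Φ (y + t • (x - y))) = ∫⁻ y in Ys, Φ ((t • x) + (1 - t) • y) by
      congr 1; funext y; rw [congrFun heq y]]
    refine lintegral_comp_affine_le hΦ hYmeas hYm (t • x) (by linarith [ht.2]) (by linarith [ht.1]) ?_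
    rintro z ⟨y, hy, rfl⟩
    exact hYconv hx (hYsub hy) (le_of_lt ht.1) (by linarith [ht.2]) (by ring)
  have half2 : ∀ y ∈ Ys, ∀ t ∈ Set.Ico (1/2:ℝ) 1,
      ∫⁻ x in Y, Φ (y + t • (x - y)) ≤ 2 ^ d * L := by
    intro y hy t ht
    have heq : ∀ x : Fin d → ℝ, y + t • (x - y) = ((1 - t) • y) + t • x := by
      intro x; simp only [smul_sub, sub_smul, one_smul]; abel
    rw [show (∫⁻ x in Y, Φ (y + t • (x - y))) = ∫⁻ x in Y, Φ (((1 - t) • y) + t • x) by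
      congr 1; funext x; rw [heq x]]
    refine lintegral_comp_affine_le hΦ hYm hYm ((1 - t) • y) ht.1 (le_of_lt ht.2) ?_
    rintro z ⟨x, hx, rfl⟩
    exact hYconv (hYsub hy) hx (by linarith [ht.2]) (by linarith [ht.1]) (by ring)
  have hdisj : Disjoint (Set.Ioo (0:ℝ) (1/2)) (Set.Ico (1/2:ℝ) 1) :=
    Set.disjoint_left.mpr fun a ha hb => lt_irrefl _ (lt_of_lt_of_le ha.2 hb.1)
  have hsplit : ∀ x : Fin d → ℝ,
      (∫⁻ y in Ys, ∫⁻ t in Set.Ioo (0:ℝ) 1, Φ (y + t • (x - y)))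
      = (∫⁻ y in Ys, ∫⁻ t in Set.Ioo (0:ℝ) (1/2), Φ (y + t • (x - y)))
        + ∫⁻ y in Ys, ∫⁻ t in Set.Ico (1/2:ℝ) 1, Φ (y + t • (x - y)) := by
    intro x
    have hin : ∀ y : Fin d → ℝ, (∫⁻ t in Set.Ioo (0:ℝ) 1, Φ (y + t • (x - y)))
        = (∫⁻ t in Set.Ioo (0:ℝ) (1/2), Φ (y + t • (x - y)))
          + ∫⁻ t in Set.Ico (1/2:ℝ) 1, Φ (y + t • (x - y)) := by
      intro y
      rw [← Set.Ioo_union_Ico_eq_Ioo (by norm_num : (0:ℝ) < 1/2) (by norm_num : (1/2:ℝ) ≤ 1),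
        lintegral_union measurableSet_Ico hdisj]
    simp_rw [hin]
    exact lintegral_add_left (hmeas_t x _) _
  set c2L : ℝ≥0∞ := 2 ^ d * L * ENNReal.ofReal (1/2) with hc2L
  have hT1le : (∫⁻ x in Y, ∫⁻ y in Ys, ∫⁻ t in Set.Ioo (0:ℝ) (1/2), Φ (y + t • (x - y))) ≤ c2L := by
    calc (∫⁻ x in Y, ∫⁻ y in Ys, ∫⁻ t in Set.Ioo (0:ℝ) (1/2), Φ (y + t • (x - y)))
        ≤ ∫⁻ _ in Y, c2L := by
          refine setLIntegral_mono measurable_const (fun x hx => ?_)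
          have hswap : (∫⁻ y in Ys, ∫⁻ t in Set.Ioo (0:ℝ) (1/2), Φ (y + t • (x - y)))
              = ∫⁻ t in Set.Ioo (0:ℝ) (1/2), ∫⁻ y in Ys, Φ (y + t • (x - y)) :=
            lintegral_lintegral_swap ((hΦ.comp (by fun_prop :
              Measurable fun p : (Fin d → ℝ) × ℝ => p.1 + p.2 • (x - p.1))).aemeasurable)
          rw [hswap]
          calc (∫⁻ t in Set.Ioo (0:ℝ) (1/2), ∫⁻ y in Ys, Φ (y + t • (x - y)))
              ≤ ∫⁻ _ in Set.Ioo (0:ℝ) (1/2), (2 ^ d * L) :=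
                setLIntegral_mono measurable_const (fun t ht => half1 x hx t ht)
            _ = 2 ^ d * L * volume (Set.Ioo (0:ℝ) (1/2)) := setLIntegral_const _ _
            _ = c2L := by rw [hc2L, Real.volume_Ioo]; norm_num
      _ = c2L := by rw [setLIntegral_const, hY1, mul_one]
  have hT2le : (∫⁻ x in Y, ∫⁻ y in Ys, ∫⁻ t in Set.Ico (1/2:ℝ) 1, Φ (y + t • (x - y))) ≤ c2L := by
    have hswap1 : (∫⁻ x in Y, ∫⁻ y in Ys, ∫⁻ t in Set.Ico (1/2:ℝ) 1, Φ (y + t • (x - y)))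
        = ∫⁻ y in Ys, ∫⁻ x in Y, ∫⁻ t in Set.Ico (1/2:ℝ) 1, Φ (y + t • (x - y)) :=
      lintegral_lintegral_swap ((hbase2 _).aemeasurable)
    rw [hswap1]
    calc (∫⁻ y in Ys, ∫⁻ x in Y, ∫⁻ t in Set.Ico (1/2:ℝ) 1, Φ (y + t • (x - y)))
        ≤ ∫⁻ _ in Ys, (2 ^ d * L * ENNReal.ofReal (1/2)) := by
          refine setLIntegral_mono measurable_const (fun y hy => ?_)
          have hswap2 : (∫⁻ x in Y, ∫⁻ t in Set.Ico (1/2:ℝ) 1, Φ (y + t • (x - y)))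
              = ∫⁻ t in Set.Ico (1/2:ℝ) 1, ∫⁻ x in Y, Φ (y + t • (x - y)) :=
            lintegral_lintegral_swap ((hΦ.comp (by fun_prop :
              Measurable fun p : (Fin d → ℝ) × ℝ => y + p.2 • (p.1 - y))).aemeasurable)
          rw [hswap2]
          calc (∫⁻ t in Set.Ico (1/2:ℝ) 1, ∫⁻ x in Y, Φ (y + t • (x - y)))
              ≤ ∫⁻ _ in Set.Ico (1/2:ℝ) 1, (2 ^ d * L) :=
                setLIntegral_mono measurable_const (fun t ht => half2 y hy t ht)
            _ = 2 ^ d * L * volume (Set.Ico (1/2:ℝ) 1) := setLIntegral_const _ _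
            _ = 2 ^ d * L * ENNReal.ofReal (1/2) := by rw [Real.volume_Ico]; norm_num
      _ = (2 ^ d * L * ENNReal.ofReal (1/2)) * volume Ys := setLIntegral_const _ _
      _ ≤ c2L := by
          rw [hc2L]
          exact le_trans (mul_le_mul_of_nonneg_left hμle1 (by positivity)) (by rw [mul_one])
  have hTle : (∫⁻ x in Y, ∫⁻ y in Ys, ∫⁻ t in Set.Ioo (0:ℝ) 1, Φ (y + t • (x - y)))
      ≤ 2 ^ d * L := by
    calc (∫⁻ x in Y, ∫⁻ y in Ys, ∫⁻ t in Set.Ioo (0:ℝ) 1, Φ (y + t • (x - y)))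
        = (∫⁻ x in Y, ∫⁻ y in Ys, ∫⁻ t in Set.Ioo (0:ℝ) (1/2), Φ (y + t • (x - y)))
          + ∫⁻ x in Y, ∫⁻ y in Ys, ∫⁻ t in Set.Ico (1/2:ℝ) 1, Φ (y + t • (x - y)) := by
          simp_rw [hsplit]
          exact lintegral_add_left (hmeas_yt _) _
      _ ≤ c2L + c2L := add_le_add hT1le hT2le
      _ = 2 ^ d * L := by
          rw [hc2L, ← mul_add, ← ENNReal.ofReal_add (by norm_num) (by norm_num)]
          norm_num
  have main : ENNReal.ofReal (∫ x in Y, F x) * volume Ys ≤ (d : ℝ≥0∞) * (2 ^ d * L) := by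
    rw [hFeq]
    exact step2.trans (mul_le_mul_of_nonneg_left hTle (by positivity))
  have hμr : 0 < (volume Ys).toReal := ENNReal.toReal_pos hYpos.ne' hμne
  have hIGnn : 0 ≤ ∫ x in Y, Gsq v x := setIntegral_nonneg hYm (fun x _ => Gsq_nonneg v x)
  have hIFnn : 0 ≤ ∫ x in Y, F x := setIntegral_nonneg hYm (fun x _ => hFnn x)
  have hrhs_ne : (d : ℝ≥0∞) * (2 ^ d * L) ≠ ∞ := by
    refine ENNReal.mul_ne_top (ENNReal.natCast_ne_top d) (ENNReal.mul_ne_top ?_ hLne)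
    exact (ENNReal.pow_ne_top (by norm_num))
  have hfin := ENNReal.toReal_mono hrhs_ne main
  rw [ENNReal.toReal_mul, ENNReal.toReal_ofReal hIFnn, ENNReal.toReal_mul, ENNReal.toReal_mul,
    ← hLeq, ENNReal.toReal_ofReal hIGnn, ENNReal.toReal_natCast] at hfin
  have h2d : ((2:ℝ≥0∞) ^ d).toReal = (2:ℝ) ^ d := by
    rw [ENNReal.toReal_pow]; norm_num
  rw [h2d] at hfin
  rw [div_mul_eq_mul_div, le_div_iff₀ hμr]
  calc (∫ x in Y, F x) * (volume Ys).toReal ≤ (d:ℝ) * ((2:ℝ)^d * ∫ x in Y, Gsq v x) := hfin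
    _ = (d:ℝ) * 2 ^ d * ∫ x in Y, Gsq v x := by ring

end CellPoincare

section Scaling

variable {d m : ℕ}

lemma scaledCell_eq_preimage {ε : ℝ} (hε : ε ≠ 0) (k : Fin d → ℤ) (S : Set (Fin d → ℝ)) :
    scaledCell ε k S = (fun x => ε⁻¹ • x - fun i => (k i : ℝ)) ⁻¹' S := by
  ext z
  constructor
  · rintro ⟨y, hy, rfl⟩
    simpa [smul_smul, inv_mul_cancel₀ hε] using hy
  · intro hz
    exact ⟨ε⁻¹ • z - fun i => (k i : ℝ), hz, by
      simp [smul_sub, smul_smul, mul_inv_cancel₀ hε]⟩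

lemma scaledCell_measurable {ε : ℝ} (hε : ε ≠ 0) (k : Fin d → ℤ) {S : Set (Fin d → ℝ)}
    (hS : MeasurableSet S) : MeasurableSet (scaledCell ε k S) := by
  rw [scaledCell_eq_preimage hε]
  exact hS.preimage ((measurable_id.const_smul ε⁻¹).sub measurable_const)

lemma setIntegral_scaledCell (f : (Fin d → ℝ) → ℝ) {S : Set (Fin d → ℝ)}
    (hS : MeasurableSet S) (k : Fin d → ℤ) {ε : ℝ} (hε : 0 < ε) :
    ∫ y in S, f (ε • ((fun i => (k i : ℝ)) + y))
      = (ε ^ d)⁻¹ * ∫ x in scaledCell ε k S, f x := by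
  set kv : Fin d → ℝ := fun i => (k i : ℝ) with hkv
  set A : (Fin d → ℝ) → (Fin d → ℝ) := fun y => ε • (kv + y) with hA
  have hAinj : Function.Injective A := by
    intro a b hab
    have := congrArg (fun z => ε⁻¹ • z) hab
    simpa [hA, smul_smul, inv_mul_cancel₀ hε.ne'] using this
  have hSim : MeasurableSet (A '' S) := scaledCell_measurable hε.ne' k hS
  have hind : S.indicator (fun y => f (A y)) = fun y => (A '' S).indicator f (A y) := by
    funext y
    by_cases hy : y ∈ S
    · simp [Set.indicator_of_mem hy, Set.indicator_of_mem (Set.mem_image_of_mem A hy)]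
    · have h2 : A y ∉ A '' S := fun ⟨y', hy', hyy⟩ => hy (hAinj hyy ▸ hy')
      simp [Set.indicator_of_notMem hy, Set.indicator_of_notMem h2]
  have key : ∀ y : Fin d → ℝ, A y = ε • kv + ε • y := fun y => by show ε • (kv + y) = ε • kv + ε • y; rw [smul_add]
  have h2 : (∫ y, (fun z => (A '' S).indicator f (ε • kv + z)) (ε • y))
      = |(ε ^ d)⁻¹| • ∫ z, (A '' S).indicator f (ε • kv + z) := by
    have := Measure.integral_comp_smul (volume : Measure (Fin d → ℝ))
      (fun z => (A '' S).indicator f (ε • kv + z)) ε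
    rwa [Module.finrank_fin_fun] at this
  have h3 : (∫ z, (A '' S).indicator f (ε • kv + z)) = ∫ z, (A '' S).indicator f z :=
    integral_add_left_eq_self ((A '' S).indicator f) (ε • kv)
  calc ∫ y in S, f (A y)
      = ∫ y, S.indicator (fun y => f (A y)) y := (integral_indicator hS).symm
    _ = ∫ y, (fun z => (A '' S).indicator f (ε • kv + z)) (ε • y) := by
        rw [hind]; simp_rw [key]
    _ = |(ε ^ d)⁻¹| • ∫ z, (A '' S).indicator f (ε • kv + z) := h2
    _ = (ε ^ d)⁻¹ * ∫ x in scaledCell ε k S, f x := by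
        rw [h3, integral_indicator hSim, abs_of_nonneg (by positivity), smul_eq_mul]
        rfl

end Scaling

section Transfer

variable {d m : ℕ}

lemma Gsq_comp_scale {v : (Fin d → ℝ) → (Fin m → ℝ)} (hv : ContDiff ℝ 1 v)
    (k : Fin d → ℤ) {ε : ℝ} (hε : 0 < ε) (y : Fin d → ℝ) :
    Gsq (fun z => v (ε • ((fun i => (k i : ℝ)) + z))) y
      = ε ^ 2 * Gsq v (ε • ((fun i => (k i : ℝ)) + y)) := by
  set kv : Fin d → ℝ := fun i => (k i : ℝ) with hkv
  set A : (Fin d → ℝ) → (Fin d → ℝ) := fun z => ε • (kv + z) with hA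
  have hAfun : A = fun z => ε • kv + ε • z := by
    funext z; show ε • (kv + z) = _; rw [smul_add]
  have hAder : HasFDerivAt A (ε • ContinuousLinearMap.id ℝ (Fin d → ℝ)) y := by
    rw [hAfun]
    exact ((hasFDerivAt_id y).const_smul ε).const_add (ε • kv)
  have hder : ∀ (i : Fin m) (j : Fin d),
      fderiv ℝ (fun z => v (A z) i) y (Pi.single j 1)
        = ε * fderiv ℝ (fun z => v z i) (A y) (Pi.single j 1) := by
    intro i j
    have hu : HasFDerivAt (fun z => v z i) (fderiv ℝ (fun z => v z i) (A y)) (A y) :=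
      (((contDiff_comp_proj hv i).differentiable one_ne_zero) (A y)).hasFDerivAt
    have hcomp : HasFDerivAt (fun z => v (A z) i)
        ((fderiv ℝ (fun z => v z i) (A y)).comp (ε • ContinuousLinearMap.id ℝ (Fin d → ℝ))) y :=
      hu.comp y hAder
    rw [hcomp.fderiv]
    simp [smul_eq_mul, _root_.map_smul]
  show Gsq (fun z => v (A z)) y = ε ^ 2 * Gsq v (A y)
  have : ∀ (i : Fin m) (j : Fin d), fderiv ℝ (fun z => (fun z' => v (A z')) z i) y (Pi.single j 1)
      = ε * fderiv ℝ (fun z => v z i) (A y) (Pi.single j 1) := hder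
  simp only [Gsq, this, mul_pow, Finset.mul_sum]

lemma cell_scaled (hd : 1 ≤ d) (Ys : Set (Fin d → ℝ)) (hYsub : Ys ⊆ unitCell d)
    (hYmeas : MeasurableSet Ys) (hYpos : 0 < volume Ys)
    {ε : ℝ} (hε : 0 < ε) (k : Fin d → ℤ)
    (v : (Fin d → ℝ) → (Fin m → ℝ)) (hv : ContDiff ℝ 1 v)
    (hv0 : ∀ y ∈ scaledCell ε k Ys, v y = 0) :
    ∫ x in scaledCell ε k (unitCell d), ∑ i, (v x i) ^ 2
      ≤ ((d:ℝ) * 2 ^ d / (volume Ys).toReal) * ε ^ 2 *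
        ∫ x in scaledCell ε k (unitCell d), Gsq v x := by
  set kv : Fin d → ℝ := fun i => (k i : ℝ) with hkv
  set w : (Fin d → ℝ) → (Fin m → ℝ) := fun z => v (ε • (kv + z)) with hw
  have hwC : ContDiff ℝ 1 w := hv.comp ((contDiff_const.add contDiff_id).const_smul ε)
  have hw0 : ∀ y ∈ Ys, w y = 0 := fun y hy => hv0 _ ⟨y, hy, rfl⟩
  have hP := cell_poincare hd Ys hYsub hYmeas hYpos w hwC hw0
  have hL : (∫ x in unitCell d, ∑ i, (w x i) ^ 2)
      = (ε ^ d)⁻¹ * ∫ x in scaledCell ε k (unitCell d), ∑ i, (v x i) ^ 2 :=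
    setIntegral_scaledCell (fun x => ∑ i, (v x i) ^ 2) unitCell_measurable k hε
  have hR : (∫ x in unitCell d, Gsq w x)
      = ε ^ 2 * ((ε ^ d)⁻¹ * ∫ x in scaledCell ε k (unitCell d), Gsq v x) := by
    have h1 : ∀ y, Gsq w y = ε ^ 2 * Gsq v (ε • (kv + y)) := fun y => Gsq_comp_scale hv k hε y
    calc (∫ y in unitCell d, Gsq w y)
        = ∫ y in unitCell d, ε ^ 2 * Gsq v (ε • (kv + y)) := by simp_rw [h1]
      _ = ε ^ 2 * ∫ y in unitCell d, Gsq v (ε • (kv + y)) := MeasureTheory.integral_const_mul _ _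
      _ = ε ^ 2 * ((ε ^ d)⁻¹ * ∫ x in scaledCell ε k (unitCell d), Gsq v x) := by
          rw [setIntegral_scaledCell (Gsq v) unitCell_measurable k hε]
  rw [hL, hR] at hP
  have hεd : (0:ℝ) < (ε ^ d)⁻¹ := by positivity
  have h2 : (ε ^ d)⁻¹ * (∫ x in scaledCell ε k (unitCell d), ∑ i, (v x i) ^ 2)
      ≤ (ε ^ d)⁻¹ * (((d:ℝ) * 2 ^ d / (volume Ys).toReal) * ε ^ 2 *
          ∫ x in scaledCell ε k (unitCell d), Gsq v x) := by
    calc (ε ^ d)⁻¹ * (∫ x in scaledCell ε k (unitCell d), ∑ i, (v x i) ^ 2)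
        ≤ ((d:ℝ) * 2 ^ d / (volume Ys).toReal) *
            (ε ^ 2 * ((ε ^ d)⁻¹ * ∫ x in scaledCell ε k (unitCell d), Gsq v x)) := hP
      _ = (ε ^ d)⁻¹ * (((d:ℝ) * 2 ^ d / (volume Ys).toReal) * ε ^ 2 *
            ∫ x in scaledCell ε k (unitCell d), Gsq v x) := by ring
  exact le_of_mul_le_mul_left h2 hεd

end Transfer

section Main

variable {d m : ℕ}

lemma scaledCell_disjoint {ε : ℝ} (hε : 0 < ε) {k k' : Fin d → ℤ} (hkk : k ≠ k') :
    Disjoint (scaledCell ε k (unitCell d)) (scaledCell ε k' (unitCell d)) := by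
  rw [Set.disjoint_left]
  rintro z ⟨y, hy, rfl⟩ ⟨y', hy', heq⟩
  have h1 : (fun i => (k' i : ℝ)) + y' = (fun i => (k i : ℝ)) + y := by
    have := congrArg (fun w => ε⁻¹ • w) heq
    simpa [smul_smul, inv_mul_cancel₀ hε.ne'] using this
  apply hkk
  funext i
  have h2 : (k' i : ℝ) + y' i = (k i : ℝ) + y i := congrFun h1 i
  have hyi := hy i (Set.mem_univ i)
  have hyi' := hy' i (Set.mem_univ i)
  rw [Set.mem_Ioo] at hyi hyi'
  have h3 : ((k i - k' i : ℤ) : ℝ) = y' i - y i := by push_cast; linarith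
  have habs : |((k i - k' i : ℤ) : ℝ)| < 1 := by
    rw [h3, abs_lt]
    constructor <;> linarith [hyi.1, hyi.2, hyi'.1, hyi'.2]
  rw [← Int.cast_abs] at habs
  have h4 : |k i - k' i| < 1 := by exact_mod_cast habs
  have h5 := abs_lt.1 h4
  omega

lemma integrableOn_scaledCell {f : (Fin d → ℝ) → ℝ} (hf : Continuous f) {ε : ℝ}
    (hε : 0 < ε) (k : Fin d → ℤ) :
    IntegrableOn f (scaledCell ε k (unitCell d)) volume := by
  have hcomp : IsCompact ((fun y => ε • ((fun i => (k i : ℝ)) + y)) '' Set.Icc 0 1) :=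
    (isCompact_Icc).image (by fun_prop)
  exact (hf.continuousOn.integrableOn_compact hcomp).mono_set
    (Set.image_mono unitCell_subset_Icc)

theorem eps_scaled_poincare' (hd : 1 ≤ d) (hm : 1 ≤ m)
    (Ys : Set (Fin d → ℝ)) (hYsub : Ys ⊆ unitCell d)
    (hYmeas : MeasurableSet Ys) (hYpos : 0 < volume Ys) :
    ∃ cP : ℝ, 0 < cP ∧
      ∀ (ε : ℝ), 0 < ε → ∀ (K : Finset (Fin d → ℤ)),
        ∀ v : (Fin d → ℝ) → (Fin m → ℝ), ContDiff ℝ 1 v →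
          (∀ x ∈ ⋃ k ∈ K, scaledCell ε k Ys, v x = 0) →
          ∫ x in ⋃ k ∈ K, scaledCell ε k (unitCell d), ∑ i, (v x i) ^ 2
            ≤ cP ^ 2 * ε ^ 2 *
              ∫ x in ⋃ k ∈ K, scaledCell ε k (unitCell d),
                ∑ i, ∑ j, (fderiv ℝ (fun z => v z i) x (Pi.single j 1)) ^ 2 := by
  have hμr : 0 < (volume Ys).toReal :=
    ENNReal.toReal_pos hYpos.ne'
      ((lt_of_le_of_lt (le_trans (measure_mono hYsub) unitCell_volume.le)
        ENNReal.one_lt_top).ne)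
  set C : ℝ := (d:ℝ) * 2 ^ d / (volume Ys).toReal with hC
  have hdpos : (0:ℝ) < d := by exact_mod_cast hd
  have hCpos : 0 < C := div_pos (by positivity) hμr
  refine ⟨Real.sqrt C, Real.sqrt_pos.2 hCpos, ?_⟩
  intro ε hε K v hv hv0
  have hsq : Real.sqrt C ^ 2 = C := Real.sq_sqrt hCpos.le
  have hFcont : Continuous fun x => ∑ i, (v x i) ^ 2 :=
    continuous_finset_sum _ fun i _ => ((continuous_apply i).comp hv.continuous).pow 2
  have hGcont : Continuous (Gsq v) := continuous_Gsq hv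
  have hmeas : ∀ k : Fin d → ℤ, MeasurableSet (scaledCell ε k (unitCell d)) :=
    fun k => scaledCell_measurable hε.ne' k unitCell_measurable
  have hdisj : Set.Pairwise (↑K) (Function.onFun Disjoint fun k => scaledCell ε k (unitCell d)) :=
    fun k _ k' _ hkk => scaledCell_disjoint hε hkk
  have hbi1 := integral_biUnion_finset (μ := volume) (f := fun x => ∑ i, (v x i) ^ 2) K
    (fun k _ => hmeas k) hdisj (fun k _ => integrableOn_scaledCell hFcont hε k)
  have hbi2 := integral_biUnion_finset (μ := volume) (f := Gsq v) K
    (fun k _ => hmeas k) hdisj (fun k _ => integrableOn_scaledCell hGcont hε k)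
  show (∫ x in ⋃ k ∈ K, scaledCell ε k (unitCell d), ∑ i, (v x i) ^ 2)
      ≤ Real.sqrt C ^ 2 * ε ^ 2 * ∫ x in ⋃ k ∈ K, scaledCell ε k (unitCell d), Gsq v x
  rw [hbi1, hbi2, hsq]
  calc (∑ k ∈ K, ∫ x in scaledCell ε k (unitCell d), ∑ i, (v x i) ^ 2)
      ≤ ∑ k ∈ K, C * ε ^ 2 * ∫ x in scaledCell ε k (unitCell d), Gsq v x :=
        Finset.sum_le_sum fun k hk => cell_scaled hd Ys hYsub hYmeas hYpos hε k v hv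
          (fun y hy => hv0 y (Set.mem_biUnion hk hy))
    _ = C * ε ^ 2 * ∑ k ∈ K, ∫ x in scaledCell ε k (unitCell d), Gsq v x := by
        rw [Finset.mul_sum]

end Main


/-- **ε-scaled Poincaré inequality in a periodically perforated domain**: if `Yˢ ⊆ (0,1)^d`
has positive measure, then there is `c_P > 0` (depending only on `Yˢ`) such that for every
`ε > 0`, every finite `K ⊆ ℤ^d`, and every `C¹` function `v : ℝ^d → ℝ^m` vanishing on
`⋃_{k∈K} ε(k + Yˢ)`,
`∫_Ω |v|² ≤ c_P² ε² ∫_Ω ‖Dv‖²`, where `Ω = ⋃_{k∈K} ε(k + Y)`. -/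
theorem eps_scaled_poincare {d m : ℕ} (hd : 1 ≤ d) (hm : 1 ≤ m)
    (Ys : Set (Fin d → ℝ)) (hYsub : Ys ⊆ unitCell d)
    (hYmeas : MeasurableSet Ys) (hYpos : 0 < volume Ys) :
    ∃ cP : ℝ, 0 < cP ∧
      ∀ (ε : ℝ), 0 < ε → ∀ (K : Finset (Fin d → ℤ)),
        ∀ v : (Fin d → ℝ) → (Fin m → ℝ), ContDiff ℝ 1 v →
          (∀ x ∈ ⋃ k ∈ K, scaledCell ε k Ys, v x = 0) →
          ∫ x in ⋃ k ∈ K, scaledCell ε k (unitCell d), ∑ i, (v x i) ^ 2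
            ≤ cP ^ 2 * ε ^ 2 *
              ∫ x in ⋃ k ∈ K, scaledCell ε k (unitCell d),
                ∑ i, ∑ j, (fderiv ℝ (fun z => v z i) x (Pi.single j 1)) ^ 2 :=
  eps_scaled_poincare' hd hm Ys hYsub hYmeas hYpos
end
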